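/- Derivative bound for the loss-weighted gradient flow under convexity: assume each ℓ_i is nonnegative, and let θ : [0,∞) → E be differentiable with ∑_{j=1}^n ℓ_j(θ(u)) > 0 for all u ≥ 0 and θ′(u) = −∑_{i=1}^n p_i(u)·∇ℓ_i(θ(u)) where p_i(u) = ℓ_i(θ(u)) / ∑_{j=1}^n ℓ_j(θ(u)). Then for every θ₀ ∈ E and every u ≥ 0, the function v ↦ ‖θ(v) − θ₀‖² is differentiable at u and its derivative at u is at most 2·∑_{i=1}^n p_i(u)·( ℓ_i(θ₀) − ℓ_i(θ(u)) ). -/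

import Mathlib

open Set

/-- Subgradient inequality for a convex differentiable function. -/
lemma grad_convex_ineq {E : Type*} [NormedAddCommGroup E] [InnerProductSpace ℝ E] [CompleteSpace E]
    {f : E → ℝ} {g x : E} (hconv : ConvexOn ℝ Set.univ f) (hg : HasGradientAt f g x)
    (y : E) : inner ℝ g (y - x) ≤ f y - f x := by
  set A : ℝ →ᵃ[ℝ] E := AffineMap.lineMap x y with hA
  have hφconv : ConvexOn ℝ Set.univ (f ∘ A) := by
    have := hconv.comp_affineMap A
    simpa using this
  have hA0 : A 0 = x := by simp [hA]
  have hcurve : HasDerivAt (fun t : ℝ => A t) (y - x) 0 := by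
    have h : HasDerivAt (fun t : ℝ => t • (y - x) + x) (y - x) 0 := by
      simpa using ((hasDerivAt_id (0:ℝ)).smul_const (y - x)).add_const x
    convert h using 2 with t
    simp only [hA, AffineMap.lineMap_apply, vsub_eq_sub, vadd_eq_add]
  have hfd : HasFDerivAt f (InnerProductSpace.toDual ℝ E g : E →L[ℝ] ℝ) (A 0) := by
    rw [hA0]; exact hg.hasFDerivAt
  have hφ : HasDerivAt (f ∘ A) (inner ℝ g (y - x)) 0 := by
    simpa using hfd.comp_hasDerivAt 0 hcurve
  have hslope := hφconv.le_slope_of_hasDerivAt (mem_univ 0) (mem_univ 1) one_pos hφ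
  have heq : slope (f ∘ A) 0 1 = f y - f x := by
    simp [slope_def_field, Function.comp, hA]
  linarith [hslope.trans_eq heq]

/-- Derivative bound for the loss-weighted gradient flow under convexity. -/
theorem loss_weighted_gradient_flow_derivative_bound
    {E : Type*} [NormedAddCommGroup E] [InnerProductSpace ℝ E] [CompleteSpace E]
    (n : ℕ) (hn : 1 ≤ n) (ℓ : Fin n → E → ℝ) (g : Fin n → E → E)
    (hconv : ∀ i, ConvexOn ℝ Set.univ (ℓ i))
    (hgrad : ∀ i x, HasGradientAt (ℓ i) (g i x) x)
    (hnn : ∀ i x, 0 ≤ ℓ i x)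
    (θ : ℝ → E)
    (hpos : ∀ u : ℝ, 0 ≤ u → 0 < ∑ j, ℓ j (θ u))
    (hθ : ∀ u : ℝ, 0 ≤ u →
      HasDerivAt θ (-(∑ i, (ℓ i (θ u) / ∑ j, ℓ j (θ u)) • g i (θ u))) u) :
    ∀ (θ₀ : E) (u : ℝ), 0 ≤ u →
      DifferentiableAt ℝ (fun v => ‖θ v - θ₀‖ ^ 2) u ∧
      deriv (fun v => ‖θ v - θ₀‖ ^ 2) u ≤
        2 * ∑ i, (ℓ i (θ u) / ∑ j, ℓ j (θ u)) * (ℓ i θ₀ - ℓ i (θ u)) := by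
  intro θ₀ u hu
  set D : E := -(∑ i, (ℓ i (θ u) / ∑ j, ℓ j (θ u)) • g i (θ u)) with hD
  have hf : HasDerivAt (fun v => θ v - θ₀) D u := (hθ u hu).sub_const θ₀
  have hin : HasDerivAt (fun v => (inner ℝ (θ v - θ₀) (θ v - θ₀) : ℝ))
      (inner ℝ (θ u - θ₀) D + inner ℝ D (θ u - θ₀)) u := hf.inner ℝ hf
  have hns : HasDerivAt (fun v => ‖θ v - θ₀‖ ^ 2)
      (inner ℝ (θ u - θ₀) D + inner ℝ D (θ u - θ₀)) u := by
    convert hin using 2 with v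
    rw [← real_inner_self_eq_norm_sq]
  refine ⟨hns.differentiableAt, ?_⟩
  rw [hns.deriv]
  have hsymm : (inner ℝ (θ u - θ₀) D + inner ℝ D (θ u - θ₀) : ℝ)
      = 2 * inner ℝ D (θ u - θ₀) := by
    rw [real_inner_comm]; ring
  rw [hsymm]
  have key : (inner ℝ D (θ u - θ₀) : ℝ)
      ≤ ∑ i, (ℓ i (θ u) / ∑ j, ℓ j (θ u)) * (ℓ i θ₀ - ℓ i (θ u)) := by
    rw [hD, inner_neg_left, sum_inner, ← Finset.sum_neg_distrib]
    apply Finset.sum_le_sum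
    intro i _
    rw [real_inner_smul_left]
    have hp : 0 ≤ ℓ i (θ u) / ∑ j, ℓ j (θ u) :=
      div_nonneg (hnn i (θ u)) (hpos u hu).le
    have hineq : (inner ℝ (g i (θ u)) (θ₀ - θ u) : ℝ) ≤ ℓ i θ₀ - ℓ i (θ u) :=
      grad_convex_ineq (hconv i) (hgrad i (θ u)) θ₀
    have h2 : -(inner ℝ (g i (θ u)) (θ u - θ₀) : ℝ) = inner ℝ (g i (θ u)) (θ₀ - θ u) := by
      rw [← inner_neg_right]; congr 1; abel
    nlinarith [mul_le_mul_of_nonneg_left hineq hp]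
  linarith
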